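/- Let X be the Cayley graph of an infinite finitely generated group. Suppose there exist ε with 0 < ε ≤ 1/4, L ≥ 1, and R ∈ ℕ with εR ≥ 1 such that for any vertices x₁, x₂, m with d(x₁,m) = d(x₂,m) = R there exists a path from x₁ to x₂ of length at most L·R avoiding the ball B_{εR}(m). Then the divergence function of X satisfies Div(εR) ≤ (L+4)·R + 1. -/

import Mathlib

open Pointwise

/-- The symmetrized generating set `S ∪ S⁻¹`. -/
def genSet {G : Type} [Group G] (S : Finset G) : Set G :=
  (S : Set G) ∪ (S : Set G)⁻¹

/-- Word length of `g` with respect to `S`. -/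
noncomputable def wlen {G : Type} [Group G] (S : Finset G) (g : G) : ℕ :=
  sInf {n : ℕ | g ∈ (genSet S) ^ n}

/-- Word distance. -/
noncomputable def wdist {G : Type} [Group G] (S : Finset G) (x y : G) : ℕ :=
  wlen S (x⁻¹ * y)

/-- `p` is an edge path of length `ℓ` from `x` to `y` in the Cayley graph. -/
def IsPathFrom {G : Type} [Group G] (S : Finset G) (p : ℕ → G) (ℓ : ℕ) (x y : G) : Prop :=
  p 0 = x ∧ p ℓ = y ∧ ∀ i < ℓ, (p i)⁻¹ * p (i + 1) ∈ genSet S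

section Aux

variable {G : Type} [Group G] (S : Finset G)

lemma genSet_inv {g : G} (h : g ∈ genSet S) : g⁻¹ ∈ genSet S := by
  rcases h with h | h
  · exact Or.inr (by simpa using h)
  · exact Or.inl (by simpa using h)

lemma pow_genSet_inv : ∀ {n : ℕ} {g : G}, g ∈ (genSet S) ^ n → g⁻¹ ∈ (genSet S) ^ n := by
  intro n
  induction n with
  | zero => intro g h; simp_all
  | succ n ih =>
    intro g h
    rw [pow_succ] at h
    rcases h with ⟨x, hx, y, hy, rfl⟩
    rw [pow_succ']
    exact ⟨y⁻¹, genSet_inv S hy, x⁻¹, ih hx, (mul_inv_rev x y).symm⟩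

lemma exists_mem_pow (hgen : Subgroup.closure (S : Set G) = ⊤) (g : G) :
    ∃ n, g ∈ (genSet S) ^ n := by
  have hg : g ∈ Subgroup.closure (S : Set G) := hgen ▸ Subgroup.mem_top g
  induction hg using Subgroup.closure_induction with
  | mem x hx => exact ⟨1, by simpa [genSet] using Or.inl hx⟩
  | one => exact ⟨0, by simp⟩
  | mul x y _ _ hx hy =>
    obtain ⟨n, hn⟩ := hx; obtain ⟨m, hm⟩ := hy
    exact ⟨n + m, by rw [pow_add]; exact Set.mul_mem_mul hn hm⟩
  | inv x _ hx =>
    obtain ⟨n, hn⟩ := hx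
    exact ⟨n, pow_genSet_inv S hn⟩

lemma wlen_spec (hgen : Subgroup.closure (S : Set G) = ⊤) (g : G) : g ∈ (genSet S) ^ (wlen S g) :=
  Nat.sInf_mem (exists_mem_pow S hgen g)

lemma wlen_le {g : G} {n : ℕ} (h : g ∈ (genSet S) ^ n) : wlen S g ≤ n :=
  Nat.sInf_le h

lemma wlen_one : wlen S (1 : G) = 0 :=
  Nat.le_zero.mp (wlen_le S (by simp))

lemma wlen_mul_le (hgen : Subgroup.closure (S : Set G) = ⊤) (g h : G) : wlen S (g * h) ≤ wlen S g + wlen S h :=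
  wlen_le S (by rw [pow_add]; exact Set.mul_mem_mul (wlen_spec S hgen g) (wlen_spec S hgen h))

lemma wlen_inv (hgen : Subgroup.closure (S : Set G) = ⊤) (g : G) : wlen S g⁻¹ = wlen S g := by
  apply le_antisymm
  · exact wlen_le S (pow_genSet_inv S (wlen_spec S hgen g))
  · calc wlen S g = wlen S g⁻¹⁻¹ := by rw [inv_inv]
    _ ≤ wlen S g⁻¹ := wlen_le S (pow_genSet_inv S (wlen_spec S hgen g⁻¹))

lemma wdist_symm (hgen : Subgroup.closure (S : Set G) = ⊤) (x y : G) : wdist S x y = wdist S y x := by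
  unfold wdist
  rw [← wlen_inv S hgen (y⁻¹ * x)]
  simp [mul_inv_rev]

lemma wdist_triangle (hgen : Subgroup.closure (S : Set G) = ⊤) (x y z : G) : wdist S x z ≤ wdist S x y + wdist S y z := by
  unfold wdist
  calc wlen S (x⁻¹ * z) = wlen S ((x⁻¹ * y) * (y⁻¹ * z)) := by group
  _ ≤ _ := wlen_mul_le S hgen _ _

lemma wdist_self (x : G) : wdist S x x = 0 := by
  unfold wdist; simp [wlen_one]

lemma wlen_gen {s : G} (h : s ∈ genSet S) : wlen S s ≤ 1 :=
  wlen_le S (by simpa using h)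

lemma mem_pow_iff_list {A : Set G} {n : ℕ} {g : G} :
    g ∈ A ^ n ↔ ∃ l : List G, l.length = n ∧ (∀ s ∈ l, s ∈ A) ∧ l.prod = g := by
  induction n generalizing g with
  | zero =>
    simp only [pow_zero, Set.mem_one]
    constructor
    · rintro rfl; exact ⟨[], rfl, by simp, rfl⟩
    · rintro ⟨l, hl, -, rfl⟩
      rw [List.length_eq_zero_iff] at hl; simp [hl]
  | succ n ih =>
    rw [pow_succ']
    constructor
    · rintro ⟨x, hx, y, hy, rfl⟩
      obtain ⟨l, hl, hmem, rfl⟩ := ih.mp hy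
      exact ⟨x :: l, by simp [hl], by
        intro s hs
        rcases List.mem_cons.mp hs with rfl | hs
        · exact hx
        · exact hmem s hs, by simp⟩
    · rintro ⟨l, hl, hmem, rfl⟩
      cases l with
      | nil => simp at hl
      | cons x l =>
        refine ⟨x, hmem x (by simp), l.prod, ih.mpr ⟨l, by simpa using hl,
          fun s hs => hmem s (List.mem_cons_of_mem _ hs), rfl⟩, by simp⟩

/-- Existence of geodesic paths with prefix/suffix distance bounds. -/
lemma exists_geodesic (hgen : Subgroup.closure (S : Set G) = ⊤) (x y : G) :
    ∃ p : ℕ → G, IsPathFrom S p (wdist S x y) x y ∧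
      (∀ i, wdist S x (p i) ≤ i) ∧
      (∀ i ≤ wdist S x y, wdist S (p i) y ≤ wdist S x y - i) := by
  set ℓ := wdist S x y with hℓ
  have hmem : x⁻¹ * y ∈ (genSet S) ^ ℓ := wlen_spec S hgen _
  obtain ⟨l, hlen, hmemA, hprod⟩ := mem_pow_iff_list.mp hmem
  refine ⟨fun i => x * (l.take i).prod, ⟨by simp, ?_, ?_⟩, ?_, ?_⟩
  · show x * (l.take ℓ).prod = y
    rw [← hlen, List.take_length, hprod]; group
  · intro i hi
    have hi' : i < l.length := by rw [hlen]; exact hi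
    have : l.take (i+1) = l.take i ++ [l.get ⟨i, hi'⟩] := by
      rw [List.take_succ, List.getElem?_eq_getElem hi']; rfl
    simp only [this, List.prod_append, List.prod_cons, List.prod_nil, mul_one]
    have : (x * (l.take i).prod)⁻¹ * (x * ((l.take i).prod * l.get ⟨i, hi'⟩)) =
        l.get ⟨i, hi'⟩ := by group
    rw [this]
    exact hmemA _ (l.get_mem _)
  · intro i
    have : (l.take i).prod ∈ (genSet S) ^ (l.take i).length :=
      mem_pow_iff_list.mpr ⟨l.take i, rfl, fun s hs => hmemA s (List.mem_of_mem_take hs), rfl⟩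
    have h1 : wdist S x (x * (l.take i).prod) ≤ (l.take i).length := by
      unfold wdist
      have : x⁻¹ * (x * (l.take i).prod) = (l.take i).prod := by group
      rw [this]
      exact wlen_le S ‹_›
    calc wdist S x (x * (l.take i).prod) ≤ (l.take i).length := h1
      _ ≤ i := by simp [List.length_take]
  · intro i hi
    have hdrop : (l.drop i).prod ∈ (genSet S) ^ (l.drop i).length :=
      mem_pow_iff_list.mpr ⟨l.drop i, rfl, fun s hs => hmemA s (List.mem_of_mem_drop hs), rfl⟩
    have hsplit : (l.take i).prod * (l.drop i).prod = x⁻¹ * y := by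
      rw [← List.prod_append, List.take_append_drop, hprod]
    have h2 : (x * (l.take i).prod)⁻¹ * y = (l.drop i).prod := by
      calc (x * (l.take i).prod)⁻¹ * y = (l.take i).prod⁻¹ * (x⁻¹ * y) := by group
        _ = (l.take i).prod⁻¹ * ((l.take i).prod * (l.drop i).prod) := by rw [hsplit]
        _ = (l.drop i).prod := by group
    have : wdist S (x * (l.take i).prod) y ≤ (l.drop i).length := by
      unfold wdist; rw [h2]; exact wlen_le S hdrop
    calc wdist S (x * (l.take i).prod) y ≤ (l.drop i).length := this
      _ = l.length - i := by simp [List.length_drop]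
      _ = ℓ - i := by rw [hlen]

/-- Balls are finite, so word length is unbounded on an infinite group. -/
lemma exists_wlen_ge [Infinite G] (hgen : Subgroup.closure (S : Set G) = ⊤) (N : ℕ) : ∃ g : G, N ≤ wlen S g := by
  by_contra h
  push_neg at h
  have hA : (genSet S).Finite := (S.finite_toSet).union (S.finite_toSet.inv)
  have hpow : ∀ n, ((genSet S) ^ n : Set G).Finite := by
    intro n
    induction n with
    | zero => simp [Set.finite_one]
    | succ n ih => rw [pow_succ]; exact ih.mul hA
  have hball : (Set.univ : Set G).Finite := by
    have : (Set.univ : Set G) ⊆ ⋃ n ∈ Set.Iio N, ((genSet S) ^ n : Set G) := by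
      intro g _
      simp only [Set.mem_iUnion]
      exact ⟨wlen S g, h g, wlen_spec S hgen g⟩
    exact ((Set.finite_Iio N).biUnion (fun n _ => hpow n)).subset this
  exact Set.infinite_univ hball

/-- Discrete intermediate value theorem. -/
lemma nat_ivt {f : ℕ → ℕ} {n T : ℕ} (hstep : ∀ i < n, f (i+1) ≤ f i + 1)
    (h0 : f 0 ≤ T) (hn : T ≤ f n) : ∃ i ≤ n, f i = T := by
  classical
  have hex : ∃ i, T ≤ f i := ⟨n, hn⟩
  set i₀ := Nat.find hex with hi₀
  have hP : T ≤ f i₀ := Nat.find_spec hex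
  have hle : i₀ ≤ n := Nat.find_min' hex hn
  refine ⟨i₀, hle, ?_⟩
  match h : i₀ with
  | 0 => exact le_antisymm (h ▸ h0) (h ▸ hP)
  | (j+1) =>
    have hj : ¬ T ≤ f j := Nat.find_min hex (by omega)
    have hjn : j < n := by omega
    have := hstep j hjn
    omega

/-- Concatenation of paths. -/
lemma path_concat {p q : ℕ → G} {ℓ₁ ℓ₂ : ℕ} {x y z : G}
    (hp : IsPathFrom S p ℓ₁ x y) (hq : IsPathFrom S q ℓ₂ y z) :
    ∃ pc : ℕ → G, IsPathFrom S pc (ℓ₁ + ℓ₂) x z ∧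
      ∀ i, (i ≤ ℓ₁ ∧ pc i = p i) ∨ (ℓ₁ ≤ i ∧ pc i = q (i - ℓ₁)) := by
  obtain ⟨hp0, hpl, hpe⟩ := hp
  obtain ⟨hq0, hql, hqe⟩ := hq
  refine ⟨fun i => if i < ℓ₁ then p i else q (i - ℓ₁), ⟨?_, ?_, ?_⟩, ?_⟩
  · by_cases h : 0 < ℓ₁
    · simpa [h] using hp0
    · have hℓ : ℓ₁ = 0 := by omega
      have hx : q 0 = x := by rw [hq0, ← hpl, hℓ, hp0]
      simpa [h] using hx
  · have h : ¬ (ℓ₁ + ℓ₂ < ℓ₁) := by omega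
    simp only [h, if_false]
    simpa using hql
  · intro i hi
    by_cases h1 : i + 1 < ℓ₁
    · have h0 : i < ℓ₁ := by omega
      simp only [h0, h1, if_true]
      exact hpe i h0
    · by_cases h0 : i < ℓ₁
      · have he : i + 1 = ℓ₁ := by omega
        simp only [h0, h1, if_true, if_false]
        have : q (i + 1 - ℓ₁) = p (i+1) := by rw [he]; simp [hq0, ← hpl, he]
        rw [this]
        exact hpe i h0
      · simp only [h0, h1, if_false]
        have hj : i - ℓ₁ < ℓ₂ := by omega
        have h2 : i + 1 - ℓ₁ = (i - ℓ₁) + 1 := by omega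
        rw [h2]
        exact hqe _ hj
  · intro i
    by_cases h : i < ℓ₁
    · exact Or.inl ⟨le_of_lt h, by simp [h]⟩
    · exact Or.inr ⟨by omega, by simp [h]⟩

/-- Reversal of paths. -/
lemma path_reverse {p : ℕ → G} {ℓ : ℕ} {x y : G} (hp : IsPathFrom S p ℓ x y) :
    IsPathFrom S (fun i => p (ℓ - i)) ℓ y x := by
  obtain ⟨hp0, hpl, hpe⟩ := hp
  refine ⟨by simpa using hpl, by simpa using hp0, ?_⟩
  intro i hi
  have h1 : ℓ - i = (ℓ - (i+1)) + 1 := by omega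
  have h2 : ℓ - (i+1) < ℓ := by omega
  simp only [h1]
  have := hpe _ h2
  have hrw : (p ((ℓ - (i+1)) + 1))⁻¹ * p (ℓ - (i+1)) =
      ((p (ℓ - (i+1)))⁻¹ * p ((ℓ - (i+1)) + 1))⁻¹ := by group
  rw [hrw]
  exact genSet_inv S this

/-- Escape direction: one can find arbitrarily long `y` such that translating by `u`
increases length by at most 3. -/
lemma escape_dir [Infinite G] (hgen : Subgroup.closure (S : Set G) = ⊤) (u : G) (N : ℕ)
    (hN : 1 ≤ N) : ∃ y : G, N ≤ wlen S y ∧ wlen S (u * y) ≤ wlen S y + 3 := by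
  by_contra hcon
  push_neg at hcon
  have H : ∀ y : G, N ≤ wlen S y → wlen S y + 4 ≤ wlen S (u * y) := by
    intro y hy
    have := hcon y hy
    omega
  by_cases hB : ∃ M : ℕ, N ≤ wlen S (u ^ M)
  · classical
    obtain ⟨M, hM⟩ := hB
    set P : ℕ → Prop := fun m => wlen S (u ^ m) < N with hP
    have hP0 : P 0 := by simp only [hP, pow_zero, wlen_one]; omega
    set m₀ := Nat.findGreatest P M with hm₀
    have hPm₀ : P m₀ := Nat.findGreatest_spec (Nat.zero_le M) hP0
    have hm₀M : m₀ ≤ M := Nat.findGreatest_le M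
    have hPM : ¬ P M := by simp only [hP]; omega
    have hm₀lt : m₀ < M := by
      have hne : m₀ ≠ M := fun h => hPM (h ▸ hPm₀)
      omega
    have hnext : ¬ P (m₀ + 1) := Nat.findGreatest_is_greatest (P := P) (n := M) (by omega) (by omega)
    have hnext' : N ≤ wlen S (u ^ (m₀ + 1)) := by simp [hP] at hnext; omega
    have hylen : N ≤ wlen S ((u ^ (m₀ + 1))⁻¹) := by
      rwa [wlen_inv S hgen]
    have := H _ hylen
    have hsimp : u * (u ^ (m₀ + 1))⁻¹ = (u ^ m₀)⁻¹ := by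
      rw [pow_succ]
      group
    rw [hsimp, wlen_inv S hgen, wlen_inv S hgen] at this
    simp only [hP] at hPm₀
    omega
  · push_neg at hB
    obtain ⟨y₀, hy₀⟩ := exists_wlen_ge S hgen N
    have key : ∀ k : ℕ, wlen S y₀ + 4 * k ≤ wlen S (u ^ k * y₀) := by
      intro k
      induction k with
      | zero => simp
      | succ k ih =>
        have hk : N ≤ wlen S (u ^ k * y₀) := le_trans (le_trans hy₀ (by omega)) ih
        have := H _ hk
        have hrw : u * (u ^ k * y₀) = u ^ (k+1) * y₀ := by
          rw [pow_succ']; group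
        rw [hrw] at this
        omega
    have hup : wlen S (u ^ N * y₀) ≤ wlen S (u ^ N) + wlen S y₀ :=
      wlen_mul_le S hgen _ _
    have := key N
    have := hB N
    omega

/-- From any point within distance `R` of `c`, there is a short path out to the sphere of
radius exactly `R` around `c`, staying at distance roughly at least half of `d(c,a)`. -/
lemma escape_to_sphere [Infinite G] (hgen : Subgroup.closure (S : Set G) = ⊤)
    (c a : G) (R : ℕ) (hR : 1 ≤ R) (hra : wdist S c a ≤ R) :
    ∃ (n : ℕ) (σ : ℕ → G), n ≤ R + 3 ∧ IsPathFrom S σ n a (σ n) ∧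
      wdist S c (σ n) = R ∧ ∀ i ≤ n, wdist S c a ≤ 2 * wdist S c (σ i) + 3 := by
  obtain ⟨y, hyN, hylen⟩ := escape_dir S hgen (a⁻¹ * c) (2 * R) (by omega)
  set w := c * y with hw
  have hDw : wdist S c w = wlen S y := by
    unfold wdist
    rw [show c⁻¹ * w = y by rw [hw]; group]
  have haw : wdist S a w ≤ wlen S y + 3 := by
    unfold wdist
    rw [show a⁻¹ * w = (a⁻¹ * c) * y by rw [hw]; group]
    exact hylen
  obtain ⟨σ, hσpath, hσpre, hσsuf⟩ := exists_geodesic S hgen a w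
  set ℓw := wdist S a w with hℓw
  have hℓwb : ℓw ≤ wdist S c w + 3 := by rw [hDw]; exact haw
  have bound1 : ∀ i, wdist S c a ≤ wdist S c (σ i) + i := by
    intro i
    have h1 := wdist_triangle S hgen c (σ i) a
    have h2 : wdist S (σ i) a ≤ i := by
      rw [wdist_symm S hgen]; exact hσpre i
    omega
  have bound2 : ∀ i ≤ ℓw, i ≤ wdist S c (σ i) + 3 := by
    intro i hi
    have h1 := wdist_triangle S hgen c (σ i) w
    have h2 := hσsuf i hi
    omega
  have hsteps : ∀ i < ℓw, wdist S c (σ (i+1)) ≤ wdist S c (σ i) + 1 := by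
    intro i hi
    have h1 := wdist_triangle S hgen c (σ i) (σ (i+1))
    have h2 : wdist S (σ i) (σ (i+1)) ≤ 1 := wlen_gen S (hσpath.2.2 i hi)
    omega
  have h0 : wdist S c (σ 0) ≤ R := by rw [hσpath.1]; exact hra
  have hend : R ≤ wdist S c (σ ℓw) := by
    rw [hσpath.2.1, hDw]; omega
  obtain ⟨i₁, hi₁ℓ, hfi₁⟩ := nat_ivt (f := fun i => wdist S c (σ i)) hsteps h0 hend
  refine ⟨i₁, σ, ?_, ⟨hσpath.1, rfl, fun i hi => hσpath.2.2 i (by omega)⟩, hfi₁, ?_⟩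
  · have := bound2 i₁ hi₁ℓ
    omega
  · intro i hi
    have := bound1 i
    have := bound2 i (by omega)
    omega

end Aux

/-- If in the Cayley graph `X` of an infinite group there are
`0 < ε ≤ 1/4`, `L ≥ 1`, `R ∈ ℕ` with `εR ≥ 1` such that any `x₁, x₂, m` with
`d(x₁,m) = d(x₂,m) = R` are joined by a path of length `≤ LR` avoiding `B_{εR}(m)`,
then `Div(εR) ≤ (L+4)R + 1`, i.e. any `a, b` with `d(a,b) ≤ εR` are joined by a path
of length at most `(L+4)R + 1` avoiding the ball of radius `r/2 - 2` around any `c`,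
where `r = d(c,{a,b})`. -/
theorem stmt_5 {G : Type} [Group G] [Infinite G] (S : Finset G)
    (hgen : Subgroup.closure (S : Set G) = ⊤)
    (ε L : ℝ) (R : ℕ) (hε0 : 0 < ε) (hε : ε ≤ 1 / 4) (hL : 1 ≤ L) (hεR : 1 ≤ ε * R)
    (hdet : ∀ x₁ x₂ m : G, wdist S x₁ m = R → wdist S x₂ m = R →
      ∃ (ℓ : ℕ) (p : ℕ → G), IsPathFrom S p ℓ x₁ x₂ ∧ (ℓ : ℝ) ≤ L * R ∧
        ∀ i ≤ ℓ, ε * R < (wdist S (p i) m : ℝ)) :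
    ∀ a b c : G, (wdist S a b : ℝ) ≤ ε * R →
      ∃ (ℓ : ℕ) (p : ℕ → G), IsPathFrom S p ℓ a b ∧ (ℓ : ℝ) ≤ (L + 4) * R + 1 ∧
        ∀ i ≤ ℓ, ((min (wdist S c a) (wdist S c b) : ℕ) : ℝ) / 2 - 2 <
          (wdist S (p i) c : ℝ) := by
  intro a b c hab
  set ra := wdist S c a with hra
  set rb := wdist S c b with hrb
  set rmin := min ra rb with hrmin
  have hRnn : (0:ℝ) ≤ (R:ℝ) := Nat.cast_nonneg R
  have hεRle : ε * R ≤ (R:ℝ) / 4 := by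
    nlinarith
  have hrminra : rmin ≤ ra := min_le_left _ _
  have hrminrb : rmin ≤ rb := min_le_right _ _
  by_cases hcase : (rmin : ℝ) ≤ ε * R - 4
  · -- c is close to {a,b}: go out to the sphere of radius R around c, detour, come back.
    have h4εR : (4:ℝ) ≤ ε * R := by
      have : (0:ℝ) ≤ (rmin:ℝ) := Nat.cast_nonneg _
      linarith
    have hR16 : (16:ℝ) ≤ (R:ℝ) := by linarith
    have hRnat : 16 ≤ R := by exact_mod_cast hR16
    -- ra, rb ≤ R
    have htri : ra ≤ rb + wdist S a b := by
      rw [hra, hrb]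
      have h := wdist_triangle S hgen c b a
      have h2 : wdist S b a = wdist S a b := wdist_symm S hgen b a
      omega
    have htri' : rb ≤ ra + wdist S a b := by
      rw [hra, hrb]
      exact wdist_triangle S hgen c a b
    have hmincase : rmin = ra ∨ rmin = rb := by
      rcases le_total ra rb with h | h
      · exact Or.inl (by rw [hrmin]; exact min_eq_left h)
      · exact Or.inr (by rw [hrmin]; exact min_eq_right h)
    have hraab : ra ≤ rmin + wdist S a b := by omega
    have hrbab : rb ≤ rmin + wdist S a b := by omega
    have hraR : ra ≤ R := by
      have : (ra : ℝ) ≤ (rmin : ℝ) + ε * R := by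
        have := hab
        calc (ra:ℝ) ≤ (rmin:ℝ) + (wdist S a b : ℝ) := by exact_mod_cast hraab
          _ ≤ (rmin:ℝ) + ε * R := by linarith
      have : (ra : ℝ) ≤ (R:ℝ) := by linarith
      exact_mod_cast this
    have hrbR : rb ≤ R := by
      have : (rb : ℝ) ≤ (rmin : ℝ) + ε * R := by
        calc (rb:ℝ) ≤ (rmin:ℝ) + (wdist S a b : ℝ) := by exact_mod_cast hrbab
          _ ≤ (rmin:ℝ) + ε * R := by linarith
      have : (rb : ℝ) ≤ (R:ℝ) := by linarith
      exact_mod_cast this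
    obtain ⟨n₁, σ, hn₁, hσpath, hσR, hσav⟩ :=
      escape_to_sphere S hgen c a R (by omega) hraR
    obtain ⟨n₂, τ, hn₂, hτpath, hτR, hτav⟩ :=
      escape_to_sphere S hgen c b R (by omega) hrbR
    obtain ⟨ℓq, Q, hQpath, hQlen, hQav⟩ :=
      hdet (σ n₁) (τ n₂) c (by rw [wdist_symm S hgen]; exact hσR)
        (by rw [wdist_symm S hgen]; exact hτR)
    have hτrev : IsPathFrom S (fun i => τ (n₂ - i)) n₂ (τ n₂) b :=
      path_reverse S hτpath
    obtain ⟨pc₁, hpc₁, hpc₁pts⟩ := path_concat S hσpath hQpath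
    obtain ⟨pc, hpc, hpcpts⟩ := path_concat S hpc₁ hτrev
    refine ⟨(n₁ + ℓq) + n₂, pc, hpc, ?_, ?_⟩
    · have hc1 : ((n₁:ℝ)) ≤ R + 3 := by exact_mod_cast hn₁
      have hc2 : ((n₂:ℝ)) ≤ R + 3 := by exact_mod_cast hn₂
      push_cast
      nlinarith
    · intro i hi
      -- a generic bound for the three kinds of points
      have hgoal : ∀ g : G, (rmin : ℝ) ≤ 2 * (wdist S c g) + 3 →
          ((rmin : ℕ) : ℝ) / 2 - 2 < (wdist S g c : ℝ) := by
        intro g hg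
        rw [wdist_symm S hgen g c]
        linarith
    
      have hεgoal : ∀ g : G, ε * R < (wdist S g c : ℝ) →
          ((rmin : ℕ) : ℝ) / 2 - 2 < (wdist S g c : ℝ) := by
        intro g hg
        have : ((rmin:ℕ):ℝ) / 2 - 2 < ε * R := by
          have : (0:ℝ) ≤ (rmin:ℝ) := Nat.cast_nonneg _
          linarith
        linarith
      rcases hpcpts i with ⟨hile, hieq⟩ | ⟨hige, hieq⟩
      · rcases hpc₁pts i with ⟨hile', hieq'⟩ | ⟨hige', hieq'⟩
        · -- on σ
          rw [hieq, hieq']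
          apply hgoal
          have := hσav i hile'
          have : (ra : ℝ) ≤ 2 * (wdist S c (σ i)) + 3 := by exact_mod_cast this
          have hle : ((rmin:ℕ):ℝ) ≤ (ra:ℝ) := by exact_mod_cast hrminra
          linarith
        · -- on Q
          rw [hieq, hieq']
          apply hεgoal
          exact hQav (i - n₁) (by omega)
      · -- on reversed τ
        rw [hieq]
        apply hgoal
        have hj : n₂ - (i - (n₁ + ℓq)) ≤ n₂ := by omega
        have := hτav _ hj
        have : (rb : ℝ) ≤ 2 * (wdist S c (τ (n₂ - (i - (n₁ + ℓq))))) + 3 := by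
          exact_mod_cast this
        have hle : ((rmin:ℕ):ℝ) ≤ (rb:ℝ) := by exact_mod_cast hrminrb
        linarith
  · -- c is far from {a,b}: a geodesic from a to b works.
    push_neg at hcase
    obtain ⟨p, hppath, hppre, hpsuf⟩ := exists_geodesic S hgen a b
    set ℓ := wdist S a b with hℓ
    refine ⟨ℓ, p, hppath, ?_, ?_⟩
    · calc (ℓ:ℝ) ≤ ε * R := hab
        _ ≤ (L + 4) * R + 1 := by nlinarith
    · intro i hi
      have h1 : ra ≤ wdist S c (p i) + i := by
        have h1 := wdist_triangle S hgen c (p i) a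
        have h2 : wdist S (p i) a ≤ i := by
          rw [wdist_symm S hgen]; exact hppre i
        omega
      have h2 : rb ≤ wdist S c (p i) + (ℓ - i) := by
        have h1 := wdist_triangle S hgen c (p i) b
        have h2 : wdist S (p i) b ≤ ℓ - i := hpsuf i hi
        omega
      have h1' : (ra : ℝ) ≤ (wdist S c (p i) : ℝ) + i := by exact_mod_cast h1
      have h2' : (rb : ℝ) ≤ (wdist S c (p i) : ℝ) + ((ℓ:ℝ) - i) := by
        have : (rb : ℝ) ≤ (wdist S c (p i) : ℝ) + ((ℓ - i : ℕ) : ℝ) := by exact_mod_cast h2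
        rwa [Nat.cast_sub hi] at this
      have hminle : ((rmin:ℕ):ℝ) ≤ (ra:ℝ) ∧ ((rmin:ℕ):ℝ) ≤ (rb:ℝ) :=
        ⟨by exact_mod_cast hrminra, by exact_mod_cast hrminrb⟩
      rw [wdist_symm S hgen (p i) c]
      have hℓεR : (ℓ:ℝ) ≤ ε * R := hab
      -- 2 * f ≥ ra + rb - ℓ ≥ 2 rmin - εR > 2 rmin - (rmin + 4) = rmin - 4
      linarith [hminle.1, hminle.2]
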